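/- Let W be a group, χ an automorphism of W with χ ∘ χ = id, and M, K normal subgroups of W of finite index. If M ∩ K = χ(M) ∩ χ(K), then [M : M ∩ χ(M)] divides [W : K] and [K : K ∩ χ(K)] divides [W : M]. -/

import Mathlib

/-- If `M ∩ K = χ(M) ∩ χ(K)` for an involutive automorphism `χ` and `M, K` have finite index,
then `[M : M ∩ χ(M)]` divides `[W : K]` and `[K : K ∩ χ(K)]` divides `[W : M]`. -/
theorem stmt_5 {W : Type*} [Group W] (χ : W ≃* W) (hχ : ∀ w, χ (χ w) = w)
    (M K : Subgroup W) [M.Normal] [K.Normal] [M.FiniteIndex] [K.FiniteIndex]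
    (h : M ⊓ K = M.map χ.toMonoidHom ⊓ K.map χ.toMonoidHom) :
    (M.map χ.toMonoidHom).relIndex M ∣ K.index ∧
      (K.map χ.toMonoidHom).relIndex K ∣ M.index := by
  constructor
  · have h1 : M ⊓ K ≤ M.map χ.toMonoidHom := h.le.trans inf_le_left
    calc (M.map χ.toMonoidHom).relIndex M ∣ (M ⊓ K).relIndex M :=
          Subgroup.relIndex_dvd_of_le_left M h1
      _ = K.relIndex M := Subgroup.inf_relIndex_left M K
      _ ∣ K.index := Subgroup.relIndex_dvd_index_of_normal K M
  · have h1 : M ⊓ K ≤ K.map χ.toMonoidHom := h.le.trans inf_le_right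
    calc (K.map χ.toMonoidHom).relIndex K ∣ (M ⊓ K).relIndex K :=
          Subgroup.relIndex_dvd_of_le_left K h1
      _ = M.relIndex K := Subgroup.inf_relIndex_right M K
      _ ∣ M.index := Subgroup.relIndex_dvd_index_of_normal M K
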